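/- Let d ≥ 1, let u be a symmetric real d×d matrix, let t ≥ 0, and suppose that I_d + 2su is invertible for every s ∈ [0,t]. Then exp(2·∫₀ᵗ (I_d + 2su)⁻¹·u ds) = I_d + 2tu, i.e., the matrix (1/2)·log(I_d + 2tu) exists and is given by ∫₀ᵗ (I_d + 2su)⁻¹·u ds. -/

import Mathlib

open Matrix NormedSpace

attribute [local instance] Matrix.linftyOpNormedRing Matrix.linftyOpNormedAlgebra

section Aux

variable {𝔸 : Type*} [NormedRing 𝔸] [NormedAlgebra ℝ 𝔸] [CompleteSpace 𝔸]

lemma aux_hasDerivAt_exp_of_commute {F : ℝ → 𝔸} {f' : 𝔸} {t : ℝ} (hF : HasDerivAt F f' t)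
    (hcomm : ∀ a b, Commute (F a) (F b)) :
    HasDerivAt (fun s => exp (F s)) (exp (F t) * f') t := by
  have hG : HasDerivAt (fun s => F s - F t) f' t := hF.sub_const _
  have h1 : HasFDerivAt (exp) (1 : 𝔸 →L[ℝ] 𝔸) ((fun s => F s - F t) t) := by
    simp only [sub_self]
    exact hasFDerivAt_exp_zero
  have hexp : HasDerivAt (fun s => exp (F s - F t)) f' t := by
    exact h1.comp_hasDerivAt t hG
  have hmul := hexp.const_mul (exp (F t))
  refine hmul.congr_of_eventuallyEq (Filter.Eventually.of_forall fun s => ?_)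
  have hadd : F t + (F s - F t) = F s := by abel
  show exp (F s) = exp (F t) * exp (F s - F t)
  letI : NormedAlgebra ℚ 𝔸 := NormedAlgebra.restrictScalars ℚ ℝ 𝔸
  rw [← exp_add_of_commute ((hcomm t s).sub_right (Commute.refl (F t))), hadd]

lemma aux_commute_intervalIntegral {f : ℝ → 𝔸} {a b : ℝ} (X : 𝔸)
    (h : ∀ s, Commute (f s) X) : Commute (∫ s in a..b, f s) X := by
  by_cases hi : IntervalIntegrable f MeasureTheory.volume a b
  · show _ * _ = _ * _
    calc (∫ s in a..b, f s) * X
        = ((ContinuousLinearMap.mul ℝ 𝔸).flip X) (∫ s in a..b, f s) := by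
          simp [ContinuousLinearMap.flip_apply]
      _ = ∫ s in a..b, ((ContinuousLinearMap.mul ℝ 𝔸).flip X) (f s) :=
          (((ContinuousLinearMap.mul ℝ 𝔸).flip X).intervalIntegral_comp_comm hi).symm
      _ = ∫ s in a..b, X * (f s) := by
          refine intervalIntegral.integral_congr fun s _ => ?_
          simp [ContinuousLinearMap.flip_apply, (h s).eq]
      _ = ∫ s in a..b, (ContinuousLinearMap.mul ℝ 𝔸 X) (f s) := by
          simp
      _ = (ContinuousLinearMap.mul ℝ 𝔸 X) (∫ s in a..b, f s) :=
          (ContinuousLinearMap.mul ℝ 𝔸 X).intervalIntegral_comp_comm hi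
      _ = X * (∫ s in a..b, f s) := by simp
  · rw [intervalIntegral.integral_undef hi]
    exact Commute.zero_left X

end Aux

theorem stmt_13 (d : ℕ) (hd : 1 ≤ d)
    (u : Matrix (Fin d) (Fin d) ℝ) (hu : u.IsSymm)
    (t : ℝ) (ht : 0 ≤ t)
    (hinv : ∀ s ∈ Set.Icc (0:ℝ) t, IsUnit ((1 : Matrix (Fin d) (Fin d) ℝ) + (2 * s) • u)) :
    exp ((2:ℝ) • ∫ s in (0:ℝ)..t, ((1 : Matrix (Fin d) (Fin d) ℝ) + (2 * s) • u)⁻¹ * u)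
      = 1 + (2 * t) • u := by
  haveI : Nonempty (Fin d) := ⟨⟨0, hd⟩⟩
  letI : ENormedAddMonoid (Matrix (Fin d) (Fin d) ℝ) :=
    NormedAddCommGroup.toENormedAddCommMonoid.toENormedAddMonoid
  haveI : TopologicalSpace.PseudoMetrizableSpace (Matrix (Fin d) (Fin d) ℝ) :=
    inferInstanceAs (TopologicalSpace.PseudoMetrizableSpace (Fin d → Fin d → ℝ))
  set P : ℝ → Matrix (Fin d) (Fin d) ℝ := fun s => 1 + (2 * s) • u with hP
  set B : ℝ → Matrix (Fin d) (Fin d) ℝ := fun s => (2:ℝ) • ((P s)⁻¹ * u) with hB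
  set F : ℝ → Matrix (Fin d) (Fin d) ℝ := fun s => ∫ r in (0:ℝ)..s, B r with hFdef
  -- continuity of P
  have hPcont : Continuous P := by
    apply continuous_const.add
    exact (Continuous.smul (continuous_const.mul continuous_id) continuous_const)
  -- the set of parameters where P is invertible is open
  have hUopen : IsOpen {s : ℝ | IsUnit (P s)} := Units.isOpen.preimage hPcont
  -- find an open interval around Icc 0 t inside this set
  obtain ⟨δ, hδpos, hδ⟩ := (isCompact_Icc (a := (0:ℝ)) (b := t)).exists_thickening_subset_open
    hUopen hinv
  set V : Set ℝ := Set.Ioo (-δ) (t + δ) with hV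
  have hVopen : IsOpen V := isOpen_Ioo
  have hVsub : V ⊆ {s : ℝ | IsUnit (P s)} := by
    intro x hx
    apply hδ
    rw [Metric.mem_thickening_iff]
    rcases le_or_gt x 0 with h0 | h0
    · exact ⟨0, Set.left_mem_Icc.2 ht, by
        rw [Real.dist_eq, abs_of_nonpos (by linarith)]; linarith [hx.1]⟩
    rcases le_or_gt x t with h1 | h1
    · exact ⟨x, ⟨le_of_lt h0, h1⟩, by simpa using hδpos⟩
    · exact ⟨t, Set.right_mem_Icc.2 ht, by
        rw [Real.dist_eq, abs_of_pos (by linarith)]; linarith [hx.2]⟩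
  have hIccV : Set.Icc (0:ℝ) t ⊆ V := fun x hx => ⟨by linarith [hx.1], by linarith [hx.2]⟩
  -- continuity of B on V
  have hBcont : ContinuousOn B V := by
    intro s hs
    show ContinuousWithinAt (fun s => (2:ℝ) • ((P s)⁻¹ * u)) V s
    refine ContinuousWithinAt.const_smul (g := fun s => (P s)⁻¹ * u) ?_ (2:ℝ)
    apply ContinuousWithinAt.mul _ continuousWithinAt_const
    apply ContinuousAt.continuousWithinAt
    have hdet : IsUnit (P s).det := (Matrix.isUnit_iff_isUnit_det _).mp (hVsub hs)
    have hinvcont : ContinuousAt Inv.inv (P s) := by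
      apply continuousAt_matrix_inv
      rcases hdet with ⟨w, hw⟩
      rw [← hw]
      exact NormedRing.inverse_continuousAt w
    exact hinvcont.comp hPcont.continuousAt
  -- derivative of F on Icc 0 t
  have hFderiv : ∀ s ∈ Set.Icc (0:ℝ) t, HasDerivAt F (B s) s := by
    intro s hs
    have hsub : Set.uIcc (0:ℝ) s ⊆ V := by
      rw [Set.uIcc_of_le hs.1]
      exact fun x hx => hIccV ⟨hx.1, le_trans hx.2 hs.2⟩
    have hi : IntervalIntegrable B MeasureTheory.volume 0 s :=
      (hBcont.mono hsub).intervalIntegrable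
    exact intervalIntegral.integral_hasDerivAt_right hi
      (hBcont.stronglyMeasurableAtFilter hVopen s (hIccV hs))
      ((hBcont.continuousAt (hVopen.mem_nhds (hIccV hs))))
  -- commutation facts
  have hcuP : ∀ s, Commute u (P s) :=
    fun s => (Commute.one_right u).add_right ((Commute.refl u).smul_right _)
  have hcinv : ∀ (s : ℝ) (X : Matrix (Fin d) (Fin d) ℝ), Commute (P s) X → Commute (P s)⁻¹ X := by
    intro s X hX
    rw [Matrix.nonsing_inv_eq_ringInverse]
    by_cases h : IsUnit (P s)
    · rcases h with ⟨w, hw⟩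
      rw [← hw, Ring.inverse_unit]
      exact (hw ▸ hX : Commute (w : Matrix (Fin d) (Fin d) ℝ) X).units_inv_left
    · rw [Ring.inverse_non_unit _ h]
      exact Commute.zero_left X
  have hcPP : ∀ a b, Commute (P a) (P b) := by
    intro a b
    exact (Commute.one_right (P a)).add_right ((hcuP a).symm.smul_right _)
  have hcB : ∀ a b, Commute (B a) (B b) := by
    intro a b
    have hau : Commute (P a)⁻¹ u := hcinv a u (hcuP a).symm
    have hbu : Commute (P b)⁻¹ u := hcinv b u (hcuP b).symm
    have hii : Commute (P a)⁻¹ (P b)⁻¹ :=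
      (hcinv b _ (hcinv a _ (hcPP a b)).symm).symm
    have hcore : Commute ((P a)⁻¹ * u) ((P b)⁻¹ * u) :=
      (hii.mul_right hau).mul_left ((hbu.symm.mul_right (Commute.refl u)))
    exact (hcore.smul_left _).smul_right _
  have hcBF : ∀ r s, Commute (B r) (F s) :=
    fun r s => (aux_commute_intervalIntegral (B r) (fun x => hcB x r)).symm
  have hcFF : ∀ a b, Commute (F a) (F b) :=
    fun a b => aux_commute_intervalIntegral (F b) (fun r => hcBF r b)
  have hcFFneg : ∀ a b, Commute (-F a) (-F b) := fun a b => ((hcFF a b).neg_left).neg_right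
  -- the auxiliary function Φ
  set Φ : ℝ → Matrix (Fin d) (Fin d) ℝ := fun s => exp (-F s) * (P s) with hΦdef
  have hΦderiv : ∀ s ∈ Set.Icc (0:ℝ) t, HasDerivAt Φ 0 s := by
    intro s hs
    have hFneg : HasDerivAt (fun r => -F r) (-(B s)) s := (hFderiv s hs).neg
    have hexp : HasDerivAt (fun r => exp (-F r)) (exp (-F s) * (-(B s))) s :=
      aux_hasDerivAt_exp_of_commute hFneg hcFFneg
    have hlin : HasDerivAt (fun r : ℝ => 2 * r) 2 s := by
      simpa using (hasDerivAt_id s).const_mul 2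
    have hPderiv : HasDerivAt P ((2:ℝ) • u) s := (hlin.smul_const u).const_add 1
    have hmul := hexp.mul hPderiv
    have hBP : B s * P s = (2:ℝ) • u := by
      have hdet : IsUnit (P s).det := (Matrix.isUnit_iff_isUnit_det _).mp (hinv s hs)
      rw [hB]
      show ((2:ℝ) • ((P s)⁻¹ * u)) * P s = (2:ℝ) • u
      rw [smul_mul_assoc, mul_assoc, (hcuP s).eq, ← mul_assoc,
        Matrix.nonsing_inv_mul _ hdet, one_mul]
    have hzero : exp (-F s) * (-(B s)) * P s + exp (-F s) * ((2:ℝ) • u) = 0 := by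
      rw [mul_assoc, neg_mul, hBP, mul_neg, neg_add_cancel]
    rw [← hzero]
    exact hmul
  -- Φ is constant on [0, t]
  have hΦcont : ContinuousOn Φ (Set.Icc 0 t) :=
    fun x hx => ((hΦderiv x hx).continuousAt).continuousWithinAt
  have hΦconst := constant_of_has_deriv_right_zero hΦcont
    (fun x hx => ((hΦderiv x (Set.mem_Icc_of_Ico hx)).hasDerivWithinAt))
  have hΦt : Φ t = Φ 0 := hΦconst t (Set.right_mem_Icc.2 ht)
  have hΦ0 : Φ 0 = 1 := by
    have hF0 : F 0 = 0 := intervalIntegral.integral_same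
    have hP0 : P 0 = 1 := by simp [hP]
    rw [hΦdef]
    show exp (-F 0) * P 0 = 1
    rw [hF0, neg_zero, exp_zero, hP0, one_mul]
  have hkey : exp (-F t) * P t = 1 := hΦt.trans hΦ0
  -- convert the goal
  have hFt : (2:ℝ) • (∫ s in (0:ℝ)..t, ((1 : Matrix (Fin d) (Fin d) ℝ) + (2 * s) • u)⁻¹ * u)
      = F t := by
    rw [hFdef]
    show _ = ∫ r in (0:ℝ)..t, (2:ℝ) • ((P r)⁻¹ * u)
    rw [intervalIntegral.integral_smul]
  rw [hFt]
  have hprod : exp (F t) * exp (-F t) = 1 := by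
    have hadd' : exp (F t + -F t) = exp (F t) * exp (-F t) :=
      exp_add_of_commute ((Commute.refl (F t)).neg_right)
    rw [← hadd', add_neg_cancel, exp_zero]
  calc exp (F t) = exp (F t) * (exp (-F t) * P t) := by rw [hkey, mul_one]
    _ = exp (F t) * exp (-F t) * P t := by rw [mul_assoc]
    _ = P t := by rw [hprod, one_mul]
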